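/- Fix an irrational λ > 0 and positive integers m, n. Define f on the closed unit polydisk by f(0,0) = (0,0) and f(tᵐη, tⁿξ) = (tη, t^λ ξ) for t ∈ (0,1], (η,ξ) ∈ ∂(D×D). Then f is a well-defined homeomorphism of the closed unit polydisk onto itself, f restricts to the identity on ∂(D×D), and f maps {(x,y) : |y| = |x|^{n/m}, |x| ≤ 1} onto {(x,y) : |y| = |x|^λ, |x| ≤ 1}. -/

import Mathlib

open Complex

/-- The closed unit polydisk in `ℂ²`. -/
def polydisk : Set (ℂ × ℂ) := {p | ‖p.1‖ ≤ 1 ∧ ‖p.2‖ ≤ 1}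

/-! ### Auxiliary constructions

`tf a b p` is the unique `t ≥ 0` with `max (|p.1| / t^a, |p.2| / t^b) = 1`
(for `p ≠ 0`), i.e. `t = max (|p.1|^(1/a), |p.2|^(1/b))`.

`phi a b c d` re-parametrizes: it sends `(t^a η, t^b ξ)` to `(t^c η, t^d ξ)`. -/

noncomputable def tf (a b : ℝ) (p : ℂ × ℂ) : ℝ :=
  max (‖p.1‖ ^ (1/a)) (‖p.2‖ ^ (1/b))

noncomputable def phi (a b c d : ℝ) (p : ℂ × ℂ) : ℂ × ℂ :=
  (p.1 * ((tf a b p ^ (c - a) : ℝ) : ℂ), p.2 * ((tf a b p ^ (d - b) : ℝ) : ℂ))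

lemma tf_nonneg (a b : ℝ) (p : ℂ × ℂ) : 0 ≤ tf a b p :=
  le_trans (Real.rpow_nonneg (norm_nonneg _) _) (le_max_left _ _)

lemma rpow_inv_self {x a : ℝ} (hx : 0 ≤ x) (ha : 0 < a) : (x ^ (1/a)) ^ a = x := by
  rw [← Real.rpow_mul hx, one_div_mul_cancel ha.ne', Real.rpow_one]

lemma rpow_rpow_inv {t c : ℝ} (ht : 0 ≤ t) (hc : 0 < c) : (t ^ c) ^ (1/c) = t := by
  rw [← Real.rpow_mul ht, mul_one_div_cancel hc.ne', Real.rpow_one]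

lemma abs_fst_le {a : ℝ} (ha : 0 < a) (b : ℝ) (p : ℂ × ℂ) :
    ‖p.1‖ ≤ tf a b p ^ a := by
  have h := Real.rpow_le_rpow (Real.rpow_nonneg (norm_nonneg p.1) (1/a))
    (le_max_left (‖p.1‖ ^ (1/a)) (‖p.2‖ ^ (1/b))) ha.le
  rwa [rpow_inv_self (norm_nonneg _) ha] at h

lemma abs_snd_le (a : ℝ) {b : ℝ} (hb : 0 < b) (p : ℂ × ℂ) :
    ‖p.2‖ ≤ tf a b p ^ b := by
  have h := Real.rpow_le_rpow (Real.rpow_nonneg (norm_nonneg p.2) (1/b))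
    (le_max_right (‖p.1‖ ^ (1/a)) (‖p.2‖ ^ (1/b))) hb.le
  rwa [rpow_inv_self (norm_nonneg _) hb] at h

lemma tf_attained {a b : ℝ} (ha : 0 < a) (hb : 0 < b) (p : ℂ × ℂ) :
    tf a b p ^ a = ‖p.1‖ ∨ tf a b p ^ b = ‖p.2‖ := by
  rcases max_choice (‖p.1‖ ^ (1/a)) (‖p.2‖ ^ (1/b)) with h | h
  · left; rw [tf, h, rpow_inv_self (norm_nonneg _) ha]
  · right; rw [tf, h, rpow_inv_self (norm_nonneg _) hb]

lemma eq_zero_of_tf {a b : ℝ} (ha : 0 < a) (hb : 0 < b) {p : ℂ × ℂ}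
    (h : tf a b p = 0) : p.1 = 0 ∧ p.2 = 0 := by
  have h1 := abs_fst_le ha b p
  have h2 := abs_snd_le a hb p
  rw [h, Real.zero_rpow ha.ne'] at h1
  rw [h, Real.zero_rpow hb.ne'] at h2
  exact ⟨norm_eq_zero.1 (le_antisymm h1 (norm_nonneg _)),
    norm_eq_zero.1 (le_antisymm h2 (norm_nonneg _))⟩

lemma abs_phi_fst (a b c d : ℝ) (p : ℂ × ℂ) :
    ‖(phi a b c d p).1‖ = ‖p.1‖ * tf a b p ^ (c - a) := by
  rw [phi, norm_mul, Complex.norm_real, Real.norm_eq_abs,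
    _root_.abs_of_nonneg (Real.rpow_nonneg (tf_nonneg a b p) _)]

lemma abs_phi_snd (a b c d : ℝ) (p : ℂ × ℂ) :
    ‖(phi a b c d p).2‖ = ‖p.2‖ * tf a b p ^ (d - b) := by
  rw [phi, norm_mul, Complex.norm_real, Real.norm_eq_abs,
    _root_.abs_of_nonneg (Real.rpow_nonneg (tf_nonneg a b p) _)]

lemma mul_rpow_le {a c : ℝ} (ha : 0 < a) (hc : 0 < c) {t r : ℝ} (ht : 0 ≤ t)
    (hr : 0 ≤ r) (h : r ≤ t ^ a) : r * t ^ (c - a) ≤ t ^ c := by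
  rcases ht.eq_or_lt with h0 | h0
  · rw [← h0, Real.zero_rpow ha.ne'] at h
    have : r = 0 := le_antisymm h hr
    rw [this, zero_mul, ← h0, Real.zero_rpow hc.ne']
  · calc r * t ^ (c - a) ≤ t ^ a * t ^ (c - a) :=
        mul_le_mul_of_nonneg_right h (Real.rpow_nonneg ht _)
      _ = t ^ c := by rw [← Real.rpow_add h0]; ring_nf

lemma mul_rpow_eq {a c : ℝ} (ha : 0 < a) (hc : 0 < c) {t r : ℝ} (ht : 0 ≤ t)
    (h : r = t ^ a) : r * t ^ (c - a) = t ^ c := by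
  rcases ht.eq_or_lt with h0 | h0
  · rw [h, ← h0, Real.zero_rpow ha.ne', zero_mul, Real.zero_rpow hc.ne']
  · rw [h, ← Real.rpow_add h0]; ring_nf

lemma tf_phi {a b c d : ℝ} (ha : 0 < a) (hb : 0 < b) (hc : 0 < c) (hd : 0 < d)
    (p : ℂ × ℂ) : tf c d (phi a b c d p) = tf a b p := by
  set t := tf a b p with htdef
  have ht : 0 ≤ t := tf_nonneg a b p
  have hle1 : ‖(phi a b c d p).1‖ ^ (1/c) ≤ t := by
    have h2 := mul_rpow_le ha hc ht (norm_nonneg p.1) (abs_fst_le ha b p)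
    rw [← abs_phi_fst a b c d p] at h2
    calc ‖(phi a b c d p).1‖ ^ (1/c) ≤ (t ^ c) ^ (1/c) :=
        Real.rpow_le_rpow (norm_nonneg _) h2 (by positivity)
      _ = t := rpow_rpow_inv ht hc
  have hle2 : ‖(phi a b c d p).2‖ ^ (1/d) ≤ t := by
    have h2 := mul_rpow_le hb hd ht (norm_nonneg p.2) (abs_snd_le a hb p)
    rw [← abs_phi_snd a b c d p] at h2
    calc ‖(phi a b c d p).2‖ ^ (1/d) ≤ (t ^ d) ^ (1/d) :=
        Real.rpow_le_rpow (norm_nonneg _) h2 (by positivity)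
      _ = t := rpow_rpow_inv ht hd
  rcases tf_attained ha hb p with h | h
  · have heq : ‖(phi a b c d p).1‖ ^ (1/c) = t := by
      rw [abs_phi_fst a b c d p, mul_rpow_eq ha hc ht h.symm, rpow_rpow_inv ht hc]
    rw [tf, heq]
    exact max_eq_left hle2
  · have heq : ‖(phi a b c d p).2‖ ^ (1/d) = t := by
      rw [abs_phi_snd a b c d p, mul_rpow_eq hb hd ht h.symm, rpow_rpow_inv ht hd]
    rw [tf, heq]
    exact max_eq_right hle1

lemma phi_phi {a b c d : ℝ} (ha : 0 < a) (hb : 0 < b) (hc : 0 < c) (hd : 0 < d)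
    (p : ℂ × ℂ) : phi c d a b (phi a b c d p) = p := by
  have htp := tf_phi ha hb hc hd p
  set t := tf a b p with htdef
  rcases (tf_nonneg a b p).eq_or_lt with h0 | h0
  · obtain ⟨h1, h2⟩ := eq_zero_of_tf ha hb h0.symm
    have : phi a b c d p = (0, 0) := by
      rw [phi, h1, h2, zero_mul, zero_mul]
    rw [this]
    have hz : p = (0, 0) := Prod.ext h1 h2
    rw [hz, phi]
    simp
  · have key : ∀ u v : ℝ, (t ^ u : ℝ) * (t ^ v : ℝ) = t ^ (u + v) :=
      fun u v => (Real.rpow_add h0 u v).symm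
    conv_lhs => rw [phi]
    rw [htp, phi]
    ext
    · show p.1 * ((t ^ (c - a) : ℝ) : ℂ) * ((t ^ (a - c) : ℝ) : ℂ) = p.1
      rw [mul_assoc, ← Complex.ofReal_mul, key, sub_add_sub_cancel, sub_self,
        Real.rpow_zero, Complex.ofReal_one, mul_one]
    · show p.2 * ((t ^ (d - b) : ℝ) : ℂ) * ((t ^ (b - d) : ℝ) : ℂ) = p.2
      rw [mul_assoc, ← Complex.ofReal_mul, key, sub_add_sub_cancel, sub_self,
        Real.rpow_zero, Complex.ofReal_one, mul_one]

lemma phi_fst_bound {a b c d : ℝ} (ha : 0 < a) (hc : 0 < c) (p : ℂ × ℂ) :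
    ‖(phi a b c d p).1‖ ≤ tf a b p ^ c := by
  rw [abs_phi_fst]
  exact mul_rpow_le ha hc (tf_nonneg a b p) (norm_nonneg _) (abs_fst_le ha b p)

lemma phi_snd_bound {a b c d : ℝ} (hb : 0 < b) (hd : 0 < d) (p : ℂ × ℂ) :
    ‖(phi a b c d p).2‖ ≤ tf a b p ^ d := by
  rw [abs_phi_snd]
  exact mul_rpow_le hb hd (tf_nonneg a b p) (norm_nonneg _) (abs_snd_le a hb p)

lemma tf_le_one {a b : ℝ} (ha : 0 < a) (hb : 0 < b) {p : ℂ × ℂ}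
    (hp : p ∈ polydisk) : tf a b p ≤ 1 :=
  max_le (Real.rpow_le_one (norm_nonneg _) hp.1 (by positivity))
    (Real.rpow_le_one (norm_nonneg _) hp.2 (by positivity))

lemma phi_mem {a b c d : ℝ} (ha : 0 < a) (hb : 0 < b) (hc : 0 < c) (hd : 0 < d)
    {p : ℂ × ℂ} (hp : p ∈ polydisk) : phi a b c d p ∈ polydisk := by
  have h1 := tf_le_one ha hb hp
  exact ⟨le_trans (phi_fst_bound ha hc p)
      (Real.rpow_le_one (tf_nonneg a b p) h1 hc.le),
    le_trans (phi_snd_bound hb hd p)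
      (Real.rpow_le_one (tf_nonneg a b p) h1 hd.le)⟩

lemma continuous_tf {a b : ℝ} (ha : 0 < a) (hb : 0 < b) : Continuous (tf a b) := by
  have h1 : Continuous fun x : ℝ => x ^ (1/a) :=
    continuous_iff_continuousAt.2 fun x =>
      Real.continuousAt_rpow_const x (1/a) (Or.inr (by positivity))
  have h2 : Continuous fun x : ℝ => x ^ (1/b) :=
    continuous_iff_continuousAt.2 fun x =>
      Real.continuousAt_rpow_const x (1/b) (Or.inr (by positivity))
  exact ((h1.comp (continuous_norm.comp continuous_fst)).max
    (h2.comp (continuous_norm.comp continuous_snd)))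

lemma continuous_phi {a b c d : ℝ} (ha : 0 < a) (hb : 0 < b) (hc : 0 < c)
    (hd : 0 < d) : Continuous (phi a b c d) := by
  rw [continuous_iff_continuousAt]
  intro p
  rcases (tf_nonneg a b p).eq_or_lt with h0 | h0
  · -- tf = 0 case: p = 0, squeeze
    obtain ⟨h1, h2⟩ := eq_zero_of_tf ha hb h0.symm
    have htf : Continuous (tf a b) := continuous_tf ha hb
    have hbc : ∀ e : ℝ, 0 < e →
        Filter.Tendsto (fun q => tf a b q ^ e) (nhds p) (nhds 0) := by
      intro e he
      have hca : ContinuousAt (fun x : ℝ => x ^ e) (tf a b p) :=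
        Real.continuousAt_rpow_const _ _ (Or.inr he.le)
      have h3 := hca.comp (htf.continuousAt (x := p))
      simpa [ContinuousAt, Function.comp_def, ← h0, Real.zero_rpow he.ne'] using h3
    have hA : Filter.Tendsto (fun q => q.1 * ((tf a b q ^ (c - a) : ℝ) : ℂ))
        (nhds p) (nhds 0) := by
      apply squeeze_zero_norm _ (hbc c hc)
      intro q
      rw [norm_mul, Complex.norm_real, Real.norm_eq_abs, _root_.abs_of_nonneg
        (Real.rpow_nonneg (tf_nonneg a b q) _)]
      have h4 := phi_fst_bound (b := b) (d := d) ha hc q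
      rwa [abs_phi_fst] at h4
    have hB : Filter.Tendsto (fun q => q.2 * ((tf a b q ^ (d - b) : ℝ) : ℂ))
        (nhds p) (nhds 0) := by
      apply squeeze_zero_norm _ (hbc d hd)
      intro q
      rw [norm_mul, Complex.norm_real, Real.norm_eq_abs, _root_.abs_of_nonneg
        (Real.rpow_nonneg (tf_nonneg a b q) _)]
      have h4 := phi_snd_bound (a := a) (c := c) hb hd q
      rwa [abs_phi_snd] at h4
    have : ContinuousAt (fun q => (q.1 * ((tf a b q ^ (c - a) : ℝ) : ℂ),
        q.2 * ((tf a b q ^ (d - b) : ℝ) : ℂ))) p := by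
      rw [ContinuousAt]
      simp only [h1, h2, zero_mul]
      exact hA.prodMk_nhds hB
    exact this
  · -- tf > 0 : everything is continuous
    have htf : Continuous (tf a b) := continuous_tf ha hb
    have hmk : ∀ e : ℝ, ContinuousAt (fun q => ((tf a b q ^ e : ℝ) : ℂ)) p := by
      intro e
      exact Complex.continuous_ofReal.continuousAt.comp
        ((Real.continuousAt_rpow_const _ _ (Or.inl h0.ne')).comp (htf.continuousAt))
    exact (continuous_fst.continuousAt.mul (hmk (c - a))).prodMk
      (continuous_snd.continuousAt.mul (hmk (d - b)))

lemma curve {a b c d : ℝ} (ha : 0 < a) (hb : 0 < b) (hc : 0 < c) (hd : 0 < d)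
    (p : ℂ × ℂ) (h : ‖p.2‖ = ‖p.1‖ ^ (b/a)) :
    ‖(phi a b c d p).2‖ = ‖(phi a b c d p).1‖ ^ (d/c) := by
  set t := tf a b p with htdef
  have ht : 0 ≤ t := tf_nonneg a b p
  have hxy : ‖p.2‖ ^ (1/b) = ‖p.1‖ ^ (1/a) := by
    rw [h, ← Real.rpow_mul (norm_nonneg _)]
    congr 1
    field_simp
  have hteq : t = ‖p.1‖ ^ (1/a) := by
    rw [htdef, tf, hxy, max_self]
  have hx : ‖p.1‖ = t ^ a := by
    rw [hteq, rpow_inv_self (norm_nonneg _) ha]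
  have hy : ‖p.2‖ = t ^ b := by
    have : ‖p.2‖ ^ (1/b) = t := by rw [hxy, hteq]
    rw [← this, rpow_inv_self (norm_nonneg _) hb]
  rw [abs_phi_fst, abs_phi_snd, ← htdef, mul_rpow_eq ha hc ht hx,
    mul_rpow_eq hb hd ht hy, ← Real.rpow_mul ht]
  congr 1
  field_simp

lemma tf_boundary {a b : ℝ} (ha : 0 < a) (hb : 0 < b) {p : ℂ × ℂ}
    (h : max (‖p.1‖) (‖p.2‖) = 1) : tf a b p = 1 := by
  have h1 : ‖p.1‖ ≤ 1 := le_of_max_le_left h.le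
  have h2 : ‖p.2‖ ≤ 1 := le_of_max_le_right h.le
  rcases max_choice (‖p.1‖) (‖p.2‖) with hm | hm <;>
    rw [hm] at h
  · rw [tf, h, Real.one_rpow]
    exact max_eq_left (Real.rpow_le_one (norm_nonneg _) h2 (by positivity))
  · rw [tf, h, Real.one_rpow]
    exact max_eq_right (Real.rpow_le_one (norm_nonneg _) h1 (by positivity))

lemma phi_boundary {a b c d : ℝ} (ha : 0 < a) (hb : 0 < b) {p : ℂ × ℂ}
    (h : max (‖p.1‖) (‖p.2‖) = 1) : phi a b c d p = p := by
  rw [phi, tf_boundary ha hb h, Real.one_rpow, Real.one_rpow]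
  simp

lemma tf_param {m n : ℕ} (hm : 0 < m) (hn : 0 < n) {t : ℝ} (ht : 0 < t) {η ξ : ℂ}
    (hmax : max (‖η‖) (‖ξ‖) = 1) :
    tf m n ((t : ℂ) ^ m * η, (t : ℂ) ^ n * ξ) = t := by
  have hm' : (0:ℝ) < m := Nat.cast_pos.2 hm
  have hn' : (0:ℝ) < n := Nat.cast_pos.2 hn
  have habs1 : ‖((t : ℂ) ^ m * η)‖ = t ^ m * ‖η‖ := by
    rw [norm_mul, norm_pow, Complex.norm_real, Real.norm_eq_abs, _root_.abs_of_pos ht]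
  have habs2 : ‖((t : ℂ) ^ n * ξ)‖ = t ^ n * ‖ξ‖ := by
    rw [norm_mul, norm_pow, Complex.norm_real, Real.norm_eq_abs, _root_.abs_of_pos ht]
  have key : ∀ k : ℕ, 0 < k → ∀ z : ℂ,
      (t ^ k * ‖z‖) ^ (1/(k:ℝ)) = t * ‖z‖ ^ (1/(k:ℝ)) := by
    intro k hk z
    have hk' : (0:ℝ) < k := Nat.cast_pos.2 hk
    rw [Real.mul_rpow (by positivity) (norm_nonneg _),
      ← Real.rpow_natCast t k, ← Real.rpow_mul ht.le, mul_one_div_cancel hk'.ne',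
      Real.rpow_one]
  have h1 : ‖η‖ ≤ 1 := le_of_max_le_left hmax.le
  have h2 : ‖ξ‖ ≤ 1 := le_of_max_le_right hmax.le
  rw [tf]
  simp only [habs1, habs2, key m hm η, key n hn ξ]
  rcases max_choice (‖η‖) (‖ξ‖) with hc | hc <;> rw [hc] at hmax
  · rw [hmax, Real.one_rpow, mul_one]
    exact max_eq_left (by
      calc t * ‖ξ‖ ^ (1/(n:ℝ)) ≤ t * 1 := by
            exact mul_le_mul_of_nonneg_left
              (Real.rpow_le_one (norm_nonneg _) h2 (by positivity)) ht.le
        _ = t := mul_one t)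
  · rw [hmax, Real.one_rpow, mul_one]
    exact max_eq_right (by
      calc t * ‖η‖ ^ (1/(m:ℝ)) ≤ t * 1 := by
            exact mul_le_mul_of_nonneg_left
              (Real.rpow_le_one (norm_nonneg _) h1 (by positivity)) ht.le
        _ = t := mul_one t)

lemma phi_param (lam : ℝ) {m n : ℕ} (hm : 0 < m) (hn : 0 < n)
    {t : ℝ} (ht : 0 < t) {η ξ : ℂ}
    (hmax : max (‖η‖) (‖ξ‖) = 1) :
    phi m n 1 lam ((t : ℂ) ^ m * η, (t : ℂ) ^ n * ξ) =
      ((t : ℂ) * η, ((t ^ lam : ℝ) : ℂ) * ξ) := by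
  rw [phi, tf_param hm hn ht hmax]
  have e1 : (t : ℂ) ^ m * η * ((t ^ ((1:ℝ) - (m:ℕ)) : ℝ) : ℂ) = (t : ℂ) * η := by
    have h5 : t ^ (m:ℕ) * t ^ ((1:ℝ) - (m:ℕ)) = t := by
      rw [← Real.rpow_natCast t m, ← Real.rpow_add ht]
      norm_num
    calc (t : ℂ) ^ m * η * ((t ^ ((1:ℝ) - (m:ℕ)) : ℝ) : ℂ)
        = ((t ^ (m:ℕ) * t ^ ((1:ℝ) - (m:ℕ)) : ℝ) : ℂ) * η := by push_cast; ring
      _ = (t : ℂ) * η := by rw [h5]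
  have e2 : (t : ℂ) ^ n * ξ * ((t ^ (lam - (n:ℕ)) : ℝ) : ℂ) =
      ((t ^ lam : ℝ) : ℂ) * ξ := by
    have h5 : t ^ (n:ℕ) * t ^ (lam - (n:ℕ)) = t ^ lam := by
      rw [← Real.rpow_natCast t n, ← Real.rpow_add ht]
      congr 1
      ring
    calc (t : ℂ) ^ n * ξ * ((t ^ (lam - (n:ℕ)) : ℝ) : ℂ)
        = ((t ^ (n:ℕ) * t ^ (lam - (n:ℕ)) : ℝ) : ℂ) * ξ := by push_cast; ring
      _ = ((t ^ lam : ℝ) : ℂ) * ξ := by rw [h5]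
  rw [e1, e2]

/-- The map `f(tᵐη, tⁿξ) = (tη, t^λ ξ)`, `f(0,0) = (0,0)`, is a well-defined
homeomorphism of the closed unit polydisk onto itself, is the identity on the
distinguished boundary, and maps `{|y| = |x|^{n/m}}` onto `{|y| = |x|^λ}`. -/
theorem stmt12 (lam : ℝ) (hlam : Irrational lam) (hlampos : 0 < lam)
    (m n : ℕ) (hm : 0 < m) (hn : 0 < n) :
    ∃ f : polydisk ≃ₜ polydisk,
      (∀ p : polydisk, p.val = ((0 : ℂ), (0 : ℂ)) → (f p).val = ((0 : ℂ), (0 : ℂ))) ∧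
      (∀ (p q : polydisk) (t : ℝ) (η ξ : ℂ), t ∈ Set.Ioc (0 : ℝ) 1 →
        max (‖η‖) (‖ξ‖) = 1 →
        p.val = ((t : ℂ) ^ m * η, (t : ℂ) ^ n * ξ) →
        q.val = ((t : ℂ) * η, ((t ^ lam : ℝ) : ℂ) * ξ) →
        f p = q) ∧
      (∀ p : polydisk, max (‖p.val.1‖) (‖p.val.2‖) = 1 → f p = p) ∧
      (f '' {p : polydisk | ‖p.val.2‖ =
          ‖p.val.1‖ ^ ((n : ℝ) / (m : ℝ))} =
        {p : polydisk | ‖p.val.2‖ = ‖p.val.1‖ ^ lam}) := by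
  have hm' : (0:ℝ) < m := Nat.cast_pos.2 hm
  have hn' : (0:ℝ) < n := Nat.cast_pos.2 hn
  refine ⟨⟨⟨fun p => ⟨phi m n 1 lam p.val, phi_mem hm' hn' one_pos hlampos p.2⟩,
    fun p => ⟨phi 1 lam m n p.val, phi_mem one_pos hlampos hm' hn' p.2⟩,
    fun p => Subtype.ext (phi_phi hm' hn' one_pos hlampos p.val),
    fun p => Subtype.ext (phi_phi one_pos hlampos hm' hn' p.val)⟩,
    ((continuous_phi hm' hn' one_pos hlampos).comp continuous_subtype_val).subtype_mk _,
    ((continuous_phi one_pos hlampos hm' hn').comp continuous_subtype_val).subtype_mk _⟩,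
    ?_, ?_, ?_, ?_⟩
  · intro p hp
    show phi m n 1 lam p.val = ((0:ℂ), (0:ℂ))
    rw [hp, phi]
    simp
  · intro p q t η ξ htI hmax hp hq
    apply Subtype.ext
    show phi m n 1 lam p.val = q.val
    rw [hp, phi_param lam hm hn htI.1 hmax, hq]
  · intro p hmax
    exact Subtype.ext (phi_boundary hm' hn' hmax)
  · ext q
    simp only [Set.mem_image, Set.mem_setOf_eq]
    constructor
    · rintro ⟨p, hp, rfl⟩
      have h := curve hm' hn' one_pos hlampos p.val hp
      rwa [div_one] at h
    · intro hq
      refine ⟨⟨phi 1 lam m n q.val, phi_mem one_pos hlampos hm' hn' q.2⟩, ?_, ?_⟩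
      · have hq' : ‖q.val.2‖ = ‖q.val.1‖ ^ (lam / 1) := by
          rwa [div_one]
        exact curve one_pos hlampos hm' hn' q.val hq'
      · exact Subtype.ext (phi_phi one_pos hlampos hm' hn' q.val)
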